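/- arXiv:2502.12679 — 5 statements merged into one kernel-verified Lean document; each statement's English description precedes it below -/
import Mathlib

section
/- Let f : I → ℝ be Riemann integrable on an interval I and φ : [α,β] → I continuous, differentiable on (α,β), with φ' almost everywhere continuous and (f∘φ)·φ' Riemann integrable on [α,β]. Suppose further that the preimage φ⁻¹({φ(α), φ(β)}) has Lebesgue measure zero. Define g : I → ℝ by g = f on the closed interval J with endpoints φ(α), φ(β) and g = 0 elsewhere. Then (g∘φ)·φ' is Riemann integrable and ∫_{φ(α)}^{φ(β)} g(x) dx = ∫_{φ(α)}^{φ(β)} f(x) dx = ∫_α^β f(φ(t))·φ'(t) dt = ∫_α^β g(φ(t))·φ'(t) dt. -/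
open MeasureTheory Set Filter Topology intervalIntegral

lemma lipOn_null_image {K : NNReal} {w : ℝ → ℝ} {s : Set ℝ}
    (h : LipschitzOnWith K w s) (hs : volume s = 0) : volume (w '' s) = 0 := by
  have h1 := h.hausdorffMeasure_image_le (d := 1) zero_le_one
  rw [MeasureTheory.hausdorffMeasure_real] at h1
  rw [hs, mul_zero] at h1
  simpa using h1

/-- Pointwise-Lipschitz functions map null sets to null sets. -/
lemma ptLip_null_image {w : ℝ → ℝ} {s : Set ℝ} (hs : volume s = 0)
    (h : ∀ t ∈ s, ∃ C : ℝ, ∃ δ > (0:ℝ), ∀ u, |u - t| < δ → |w u - w t| ≤ C * |u - t|) :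
    volume (w '' s) = 0 := by
  set T : ℕ → ℤ → Set ℝ := fun n j =>
    {t ∈ s | ∀ u, |u - t| ≤ 1/(n+1 : ℝ) → |w u - w t| ≤ (n+1 : ℝ) * |u - t|}
      ∩ Icc ((j : ℝ) * (1/(n+1 : ℝ))) ((j+1 : ℝ) * (1/(n+1 : ℝ))) with hT
  have hcover : s ⊆ ⋃ (n : ℕ) (j : ℤ), T n j := by
    intro t ht
    obtain ⟨C, δ, hδ, hC⟩ := h t ht
    obtain ⟨n, hn⟩ := exists_nat_gt (max C (1/δ))
    have hn1 : (0:ℝ) < (n+1 : ℝ) := by positivity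
    have hCn : C ≤ (n+1 : ℝ) := le_trans (le_max_left _ _) (by linarith [hn])
    have hδ' : 1/δ < (n+1:ℝ) := lt_of_le_of_lt (le_max_right _ _) (by linarith [hn])
    have hδn : 1/(n+1 : ℝ) < δ := by
      rw [div_lt_iff₀ hn1]
      have := (div_lt_iff₀ hδ).mp hδ'
      linarith [this]
    have hmem1 : t ∈ {t ∈ s | ∀ u, |u - t| ≤ 1/(n+1 : ℝ) → |w u - w t| ≤ (n+1 : ℝ) * |u - t|} := by
      refine ⟨ht, fun u hu => ?_⟩
      have := hC u (lt_of_le_of_lt hu hδn)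
      exact le_trans this (mul_le_mul_of_nonneg_right hCn (abs_nonneg _))
    set r := 1/(n+1 : ℝ) with hr
    have hrpos : (0:ℝ) < r := by positivity
    refine mem_iUnion.2 ⟨n, mem_iUnion.2 ⟨⌊t / r⌋, ⟨hmem1, ?_, ?_⟩⟩⟩
    · calc (⌊t/r⌋ : ℝ) * r ≤ (t/r) * r := by
            exact mul_le_mul_of_nonneg_right (Int.floor_le _) hrpos.le
        _ = t := div_mul_cancel₀ t hrpos.ne'
    · calc t = (t/r) * r := (div_mul_cancel₀ t hrpos.ne').symm
        _ ≤ ((⌊t/r⌋ : ℝ) + 1) * r := by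
            exact mul_le_mul_of_nonneg_right (Int.lt_floor_add_one _).le hrpos.le
  have hTnull : ∀ (n : ℕ) (j : ℤ), volume (w '' T n j) = 0 := by
    intro n j
    have hn1 : (0:ℝ) < (n+1 : ℝ) := by positivity
    have hlip : LipschitzOnWith ((n:NNReal)+1) w (T n j) := by
      rw [lipschitzOnWith_iff_dist_le_mul]
      intro x hx y hy
      obtain ⟨hx1, hx2⟩ := hx
      obtain ⟨hy1, hy2⟩ := hy
      simp only [mem_Icc] at hx2 hy2
      set r := 1/(n+1 : ℝ) with hr
      have hxy : |x - y| ≤ r := by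
        rw [abs_le]
        constructor
        · nlinarith [hx2.1, hx2.2, hy2.1, hy2.2]
        · nlinarith [hx2.1, hx2.2, hy2.1, hy2.2]
      have := hy1.2 x hxy
      simp only [Real.dist_eq]
      push_cast
      exact this
    exact lipOn_null_image hlip (measure_mono_null (inter_subset_left.trans (sep_subset _ _)) hs)
  have : volume (⋃ (n : ℕ) (j : ℤ), w '' T n j) = 0 := by
    refine measure_iUnion_null fun n => measure_iUnion_null fun j => hTnull n j
  refine measure_mono_null ?_ this
  calc w '' s ⊆ w '' (⋃ n, ⋃ j, T n j) := image_mono hcover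
    _ ⊆ ⋃ n, ⋃ j, w '' T n j := by
        simp only [image_iUnion]
        exact subset_rfl

/-- Serrin–Varberg: if φ is differentiable on A and maps A into a null set,
then φ' = 0 a.e. on A. -/
lemma sv_null {φ φ' : ℝ → ℝ} {A N : Set ℝ}
    (hd : ∀ t ∈ A, HasDerivAt φ (φ' t) t) (hN : volume N = 0)
    (hmaps : ∀ t ∈ A, φ t ∈ N) :
    volume {t | t ∈ A ∧ φ' t ≠ 0} = 0 := by
  set E := {t | t ∈ A ∧ φ' t ≠ 0} with hE
  set T : ℕ → ℤ → Set ℝ := fun n j =>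
    {t ∈ E | ∀ u, |u - t| ≤ 1/(n+1 : ℝ) → |u - t| ≤ (n+1 : ℝ) * |φ u - φ t|}
      ∩ Icc ((j : ℝ) * (1/(n+1 : ℝ))) ((j+1 : ℝ) * (1/(n+1 : ℝ))) with hT
  have hcover : E ⊆ ⋃ (n : ℕ) (j : ℤ), T n j := by
    intro t ht
    obtain ⟨htA, htne⟩ := ht
    have habs : 0 < |φ' t| := abs_pos.2 htne
    -- from differentiability: eventually |φ u - φ t - φ' t (u-t)| ≤ (|φ' t|/2) |u - t|
    have hlo := (hasDerivAt_iff_isLittleO.mp (hd t htA)).def (show (0:ℝ) < |φ' t|/2 by linarith)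
    rw [Metric.eventually_nhds_iff] at hlo
    obtain ⟨δ, hδ, hball⟩ := hlo
    have key : ∀ u, |u - t| < δ → |u - t| ≤ (2/|φ' t|) * |φ u - φ t| := by
      intro u hu
      have h1 : ‖φ u - φ t - (u - t) • φ' t‖ ≤ |φ' t|/2 * ‖u - t‖ := by
        have := hball (show dist u t < δ by rwa [Real.dist_eq])
        simpa using this
      simp only [smul_eq_mul, Real.norm_eq_abs] at h1
      have h2 : |φ' t| * |u - t| - |φ u - φ t| ≤ |φ' t|/2 * |u - t| := by
        calc |φ' t| * |u - t| - |φ u - φ t| = |(u - t) * φ' t| - |φ u - φ t| := by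
              rw [abs_mul]; ring
          _ ≤ |φ u - φ t - (u - t) * φ' t| := by
              have := abs_sub_abs_le_abs_sub ((u - t) * φ' t) (φ u - φ t)
              calc |(u-t) * φ' t| - |φ u - φ t| ≤ |(u-t) * φ' t - (φ u - φ t)| := this
                _ = |φ u - φ t - (u - t) * φ' t| := by rw [abs_sub_comm]
          _ ≤ |φ' t|/2 * |u - t| := h1
      have h3 : (|φ' t|/2) * |u - t| ≤ |φ u - φ t| := by linarith
      rw [div_mul_eq_mul_div, le_div_iff₀ habs]
      nlinarith [abs_nonneg (u - t)]
    obtain ⟨n, hn⟩ := exists_nat_gt (max (2/|φ' t|) (1/δ))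
    have hn1 : (0:ℝ) < (n+1 : ℝ) := by positivity
    have hCn : 2/|φ' t| ≤ (n+1 : ℝ) := le_trans (le_max_left _ _) (by linarith [hn])
    have hδ' : 1/δ < (n+1:ℝ) := lt_of_le_of_lt (le_max_right _ _) (by linarith [hn])
    have hδn : 1/(n+1 : ℝ) < δ := by
      rw [div_lt_iff₀ hn1]
      have := (div_lt_iff₀ hδ).mp hδ'
      linarith [this]
    have hmem1 : t ∈ {t ∈ E | ∀ u, |u - t| ≤ 1/(n+1 : ℝ) → |u - t| ≤ (n+1 : ℝ) * |φ u - φ t|} := by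
      refine ⟨⟨htA, htne⟩, fun u hu => ?_⟩
      have := key u (lt_of_le_of_lt hu hδn)
      exact le_trans this (mul_le_mul_of_nonneg_right hCn (abs_nonneg _))
    set r := 1/(n+1 : ℝ) with hr
    have hrpos : (0:ℝ) < r := by positivity
    refine mem_iUnion.2 ⟨n, mem_iUnion.2 ⟨⌊t / r⌋, ⟨hmem1, ?_, ?_⟩⟩⟩
    · calc (⌊t/r⌋ : ℝ) * r ≤ (t/r) * r :=
            mul_le_mul_of_nonneg_right (Int.floor_le _) hrpos.le
        _ = t := div_mul_cancel₀ t hrpos.ne'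
    · calc t = (t/r) * r := (div_mul_cancel₀ t hrpos.ne').symm
        _ ≤ ((⌊t/r⌋ : ℝ) + 1) * r :=
            mul_le_mul_of_nonneg_right (Int.lt_floor_add_one _).le hrpos.le
  have hTnull : ∀ (n : ℕ) (j : ℤ), volume (T n j) = 0 := by
    intro n j
    have hdiam : ∀ x ∈ T n j, ∀ y ∈ T n j, |x - y| ≤ 1/(n+1:ℝ) := by
      intro x hx y hy
      obtain ⟨hx1, hx2⟩ := hx
      obtain ⟨hy1, hy2⟩ := hy
      simp only [mem_Icc] at hx2 hy2
      set r := 1/(n+1 : ℝ) with hr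
      rw [abs_le]
      constructor
      · nlinarith [hx2.1, hx2.2, hy2.1, hy2.2]
      · nlinarith [hx2.1, hx2.2, hy2.1, hy2.2]
    have hinj : InjOn φ (T n j) := by
      intro x hx y hy hxy
      have h1 := (mem_setOf_eq ▸ hx.1).2 y (by rw [abs_sub_comm]; exact hdiam x hx y hy)
      rw [hxy] at h1
      simp only [sub_self, abs_zero, mul_zero] at h1
      have : |y - x| = 0 := le_antisymm h1 (abs_nonneg _)
      have := abs_eq_zero.mp this
      linarith [this]
    have hlip : LipschitzOnWith ((n:NNReal)+1) (Function.invFunOn φ (T n j)) (φ '' T n j) := by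
      rw [lipschitzOnWith_iff_dist_le_mul]
      rintro x ⟨a, ha, rfl⟩ y ⟨b, hb, rfl⟩
      rw [hinj.leftInvOn_invFunOn ha, hinj.leftInvOn_invFunOn hb]
      have := (mem_setOf_eq ▸ hb.1).2 a (hdiam a ha b hb)
      simp only [Real.dist_eq]
      push_cast
      exact this
    have himgnull : volume (φ '' T n j) = 0 := by
      refine measure_mono_null ?_ hN
      rintro x ⟨a, ha, rfl⟩
      exact hmaps a ha.1.1.1
    have hTsub : T n j ⊆ Function.invFunOn φ (T n j) '' (φ '' T n j) := by
      intro x hx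
      exact ⟨φ x, mem_image_of_mem φ hx, hinj.leftInvOn_invFunOn hx⟩
    exact measure_mono_null hTsub (lipOn_null_image hlip himgnull)
  refine measure_mono_null hcover ?_
  exact measure_iUnion_null fun n => measure_iUnion_null fun j => hTnull n j

/-- A function a.e. continuous within a measurable set is a.e. strongly measurable there. -/
lemma aesm_of_ae_cont {u : ℝ → ℝ} {s : Set ℝ} (hs : MeasurableSet s)
    (h : ∀ᵐ x ∂(volume.restrict s), ContinuousWithinAt u s x) :
    AEStronglyMeasurable u (volume.restrict s) := by
  set Z := {x | ¬ ContinuousWithinAt u s x} with hZdef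
  have hZ : volume.restrict s Z = 0 := ae_iff.mp h
  set W := toMeasurable (volume.restrict s) Z with hWdef
  have hWm : MeasurableSet W := measurableSet_toMeasurable _ _
  have hWnull : volume.restrict s W = 0 := by
    rw [hWdef, measure_toMeasurable]; exact hZ
  have hco : ContinuousOn u (s \ W) := by
    intro x hx
    have hxZ : x ∉ Z := fun hxZ => hx.2 (subset_toMeasurable _ _ hxZ)
    have : ContinuousWithinAt u s x := not_not.mp (fun hc => hxZ hc)
    exact this.mono diff_subset
  have h1 : AEStronglyMeasurable u (volume.restrict (s \ W)) :=
    (hco.aemeasurable (hs.diff hWm)).aestronglyMeasurable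
  have h2 : AEStronglyMeasurable u (volume.restrict (s ∩ W)) := by
    have hz : volume (s ∩ W) = 0 := by
      rw [Measure.restrict_apply' hs] at hWnull
      rw [inter_comm]; exact hWnull
    rw [Measure.restrict_eq_zero.mpr hz]
    exact aestronglyMeasurable_zero_measure u
  have hle : volume.restrict s ≤ volume.restrict (s \ W) + volume.restrict (s ∩ W) := by
    conv_lhs => rw [← diff_union_inter s W]
    exact Measure.restrict_union_le _ _
  exact (h1.add_measure h2).mono_measure hle

lemma integrableOn_of_bdd_ae_cont {u : ℝ → ℝ} {s : Set ℝ} {M : ℝ} (hs : MeasurableSet s)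
    [IsFiniteMeasure (volume.restrict s)]
    (hb : ∀ x ∈ s, |u x| ≤ M)
    (h : ∀ᵐ x ∂(volume.restrict s), ContinuousWithinAt u s x) :
    IntegrableOn u s volume := by
  refine ⟨aesm_of_ae_cont hs h, ?_⟩
  apply HasFiniteIntegral.of_bounded (C := M)
  exact (ae_restrict_mem hs).mono fun x hx => by simpa [Real.norm_eq_abs] using hb x hx

/-- FTC for a continuous function with a.e. derivative `h`, assuming a pointwise
Lipschitz estimate at every interior point. -/
lemma ftc_ae {H h : ℝ → ℝ} {α β : ℝ} (hαβ : α < β) {K : ℝ}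
    (Hc : ContinuousOn H (Icc α β))
    (hbdd : ∀ t ∈ Icc α β, |h t| ≤ K)
    (hcont : ∀ᵐ t ∂(volume.restrict (Icc α β)), ContinuousWithinAt h (Icc α β) t)
    (hder : ∀ᵐ t, t ∈ Ioo α β → HasDerivAt H (h t) t)
    (hptw : ∀ t ∈ Ioo α β, ∃ C : ℝ, ∃ δ > (0:ℝ), ∀ u, |u - t| < δ → |H u - H t| ≤ C * |u - t|) :
    ∫ t in α..β, h t = H β - H α := by
  have hIm : MeasurableSet (Icc α β) := measurableSet_Icc
  -- integrability
  have hion : IntegrableOn h (Icc α β) volume := integrableOn_of_bdd_ae_cont hIm hbdd hcont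
  set hbar := (Icc α β).indicator h with hbardef
  have hbar_int : Integrable hbar volume := (integrable_indicator_iff hIm).2 hion
  have hbar_ii : ∀ a b : ℝ, IntervalIntegrable hbar volume a b := fun a b =>
    hbar_int.intervalIntegrable
  set U := fun t : ℝ => ∫ x in α..t, hbar x with hUdef
  have Ucont : Continuous U := intervalIntegral.continuous_primitive hbar_ii α
  set K' := max K 0 with hK'def
  have hbarbdd : ∀ x, |hbar x| ≤ K' := by
    intro x
    by_cases hx : x ∈ Icc α β
    · rw [hbardef, indicator_of_mem hx]; exact le_trans (hbdd x hx) (le_max_left _ _)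
    · rw [hbardef, indicator_of_notMem hx]
      rw [abs_zero]
      exact le_max_right K 0
  have Ulip : ∀ a b : ℝ, |U b - U a| ≤ K' * |b - a| := by
    intro a b
    have : U b - U a = ∫ x in a..b, hbar x :=
      intervalIntegral.integral_interval_sub_left (hbar_ii α b) (hbar_ii α a)
    rw [this]
    have := intervalIntegral.norm_integral_le_of_norm_le_const
      (C := K') (f := hbar) (a := a) (b := b) (fun x _ => by
        simpa [Real.norm_eq_abs] using hbarbdd x)
    simpa [Real.norm_eq_abs] using this
  set w := fun t : ℝ => H t - U t with hwdef
  have Uderiv : ∀ t ∈ Ioo α β, ContinuousWithinAt h (Icc α β) t → HasDerivAt U (h t) t := by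
    intro t ht hc
    have hIcc_nhds : Icc α β ∈ 𝓝 t := Icc_mem_nhds ht.1 ht.2
    have hca : ContinuousAt h t := hc.continuousAt hIcc_nhds
    have heq : hbar =ᶠ[𝓝 t] h :=
      eventually_of_mem hIcc_nhds (fun y hy => indicator_of_mem hy h)
    have hca' : ContinuousAt hbar t := hca.congr heq.symm
    have hsm : StronglyMeasurableAtFilter hbar (𝓝 t) volume :=
      ⟨univ, univ_mem, by rw [Measure.restrict_univ]; exact hbar_int.aestronglyMeasurable⟩
    have hd := intervalIntegral.integral_hasDerivAt_right (hbar_ii α t) hsm hca'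
    have : hbar t = h t := indicator_of_mem (Ioo_subset_Icc_self ht) h
    rw [this] at hd
    exact hd
  -- the bad set
  set bad := {t | t ∈ Ioo α β ∧
      ¬(HasDerivAt H (h t) t ∧ ContinuousWithinAt h (Icc α β) t)} with hbaddef
  have hbadnull : volume bad = 0 := by
    have hc0 : volume {t | t ∈ Icc α β ∧ ¬ ContinuousWithinAt h (Icc α β) t} = 0 := by
      have h0 := ae_iff.mp hcont
      rw [Measure.restrict_apply' hIm] at h0
      refine measure_mono_null (fun x hx => ?_) h0
      exact ⟨hx.2, hx.1⟩
    have hd0 : volume {t | t ∈ Ioo α β ∧ ¬ HasDerivAt H (h t) t} = 0 := by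
      have h0 := ae_iff.mp hder
      refine measure_mono_null (fun x hx => ?_) h0
      intro hcon
      exact hx.2 (hcon hx.1)
    refine measure_mono_null (fun x hx => ?_) (measure_union_null hd0 hc0)
    rcases not_and_or.mp hx.2 with h1 | h2
    · exact Or.inl ⟨hx.1, h1⟩
    · exact Or.inr ⟨Ioo_subset_Icc_self hx.1, h2⟩
  set W := toMeasurable volume bad with hWdef
  have hWm : MeasurableSet W := measurableSet_toMeasurable _ _
  have hWnull : volume W = 0 := by rw [hWdef, measure_toMeasurable]; exact hbadnull
  set A₂ := Ioo α β \ W with hA2def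
  have hA2m : MeasurableSet A₂ := measurableSet_Ioo.diff hWm
  have good : ∀ t ∈ A₂, HasDerivAt w 0 t := by
    intro t ht
    have htprops : HasDerivAt H (h t) t ∧ ContinuousWithinAt h (Icc α β) t := by
      by_contra hcon
      exact ht.2 (subset_toMeasurable _ _ ⟨ht.1, hcon⟩)
    have := htprops.1.sub (Uderiv t ht.1 htprops.2)
    rw [sub_self] at this; exact this
  -- constancy of w on Ioo
  have key : ∀ c ∈ Ioo α β, ∀ d ∈ Ioo α β, c ≤ d → w d = w c := by
    intro c hc d hd hcd
    have hIccsub : Icc c d ⊆ Ioo α β := fun x hx =>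
      ⟨lt_of_lt_of_le hc.1 hx.1, lt_of_le_of_lt hx.2 hd.2⟩
    have himg1 : volume (w '' (A₂ ∩ Icc c d)) = 0 := by
      refine le_antisymm ?_ zero_le
      have hderiv : ∀ x ∈ A₂ ∩ Icc c d,
          HasFDerivWithinAt w ((1 : ℝ →L[ℝ] ℝ).smulRight (0:ℝ)) (A₂ ∩ Icc c d) x := by
        intro x hx
        exact (good x hx.1).hasFDerivAt.hasFDerivWithinAt
      have hle := MeasureTheory.addHaar_image_le_lintegral_abs_det_fderiv volume
        (hA2m.inter measurableSet_Icc) hderiv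
      simpa [ContinuousLinearMap.det_toSpanSingleton] using hle
    have himg2 : volume (w '' (W ∩ Icc c d)) = 0 := by
      refine ptLip_null_image (measure_mono_null inter_subset_left hWnull) ?_
      intro t ht
      obtain ⟨C, δ, hδ, hC⟩ := hptw t (hIccsub ht.2)
      refine ⟨C + K', δ, hδ, fun u hu => ?_⟩
      have h1 := hC u hu
      have h2 := Ulip t u
      calc |w u - w t| = |(H u - H t) - (U u - U t)| := by rw [hwdef]; ring_nf
        _ ≤ |H u - H t| + |U u - U t| := abs_sub _ _
        _ ≤ C * |u - t| + K' * |u - t| := add_le_add h1 h2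
        _ = (C + K') * |u - t| := by ring
    have hwc : ContinuousOn w (Icc α β) := Hc.sub Ucont.continuousOn
    have hwc' : ContinuousOn w (uIcc c d) := by
      rw [uIcc_of_le hcd]
      exact hwc.mono (hIccsub.trans Ioo_subset_Icc_self)
    have himage : uIcc (w c) (w d) ⊆ w '' uIcc c d := intermediate_value_uIcc hwc'
    have hm1 : ENNReal.ofReal |w d - w c| ≤ volume (w '' Icc c d) := by
      have : volume (uIcc (w c) (w d)) = ENNReal.ofReal |w d - w c| := by
        rw [uIcc, Real.volume_Icc, max_sub_min_eq_abs, abs_sub_comm]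
      rw [← this]
      refine measure_mono ?_
      rw [← uIcc_of_le hcd]
      exact himage
    have hm2 : volume (w '' Icc c d) = 0 := by
      have hsplit : Icc c d ⊆ (A₂ ∩ Icc c d) ∪ (W ∩ Icc c d) := by
        intro x hx
        by_cases hxW : x ∈ W
        · exact Or.inr ⟨hxW, hx⟩
        · exact Or.inl ⟨⟨hIccsub hx, hxW⟩, hx⟩
      refine le_antisymm ?_ zero_le
      calc volume (w '' Icc c d) ≤ volume (w '' (A₂ ∩ Icc c d) ∪ w '' (W ∩ Icc c d)) :=
            measure_mono (by rw [← image_union]; exact image_mono hsplit)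
        _ ≤ volume (w '' (A₂ ∩ Icc c d)) + volume (w '' (W ∩ Icc c d)) := measure_union_le _ _
        _ = 0 := by rw [himg1, himg2, add_zero]
    rw [hm2] at hm1
    have habs : |w d - w c| ≤ 0 := ENNReal.ofReal_eq_zero.mp (le_antisymm hm1 zero_le)
    have := le_antisymm habs (abs_nonneg _)
    have := abs_eq_zero.mp this
    linarith [this]
  -- extend to endpoints by continuity
  have hwc : ContinuousOn w (Icc α β) := Hc.sub Ucont.continuousOn
  set c₀ := w ((α+β)/2) with hc₀def
  have hmid : (α+β)/2 ∈ Ioo α β := ⟨by linarith, by linarith⟩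
  have wconst : ∀ t ∈ Ioo α β, w t = c₀ := by
    intro t ht
    rcases le_total t ((α+β)/2) with hle | hle
    · exact (key t ht _ hmid hle).symm
    · exact key _ hmid t ht hle
  have hwα : w α = c₀ := by
    have hmem : α ∈ closure (Ioo α β) := by
      rw [closure_Ioo hαβ.ne]; exact ⟨le_refl _, hαβ.le⟩
    haveI hne : (𝓝[Ioo α β] α).NeBot := mem_closure_iff_nhdsWithin_neBot.mp hmem
    have h1 : Tendsto w (𝓝[Ioo α β] α) (𝓝 (w α)) :=
      (hwc α ⟨le_refl _, hαβ.le⟩).mono_left (nhdsWithin_mono α Ioo_subset_Icc_self)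
    have h2 : Tendsto w (𝓝[Ioo α β] α) (𝓝 c₀) := by
      refine Tendsto.congr' ?_ tendsto_const_nhds
      exact (eventually_mem_nhdsWithin).mono (fun t ht => (wconst t ht).symm)
    exact tendsto_nhds_unique h1 h2
  have hwβ : w β = c₀ := by
    have hmem : β ∈ closure (Ioo α β) := by
      rw [closure_Ioo hαβ.ne]; exact ⟨hαβ.le, le_refl _⟩
    haveI hne : (𝓝[Ioo α β] β).NeBot := mem_closure_iff_nhdsWithin_neBot.mp hmem
    have h1 : Tendsto w (𝓝[Ioo α β] β) (𝓝 (w β)) :=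
      (hwc β ⟨hαβ.le, le_refl _⟩).mono_left (nhdsWithin_mono β Ioo_subset_Icc_self)
    have h2 : Tendsto w (𝓝[Ioo α β] β) (𝓝 c₀) := by
      refine Tendsto.congr' ?_ tendsto_const_nhds
      exact (eventually_mem_nhdsWithin).mono (fun t ht => (wconst t ht).symm)
    exact tendsto_nhds_unique h1 h2
  have hUα : U α = 0 := intervalIntegral.integral_same
  have hUβ : U β = ∫ t in α..β, h t := by
    apply intervalIntegral.integral_congr
    intro x hx
    rw [uIcc_of_le hαβ.le] at hx
    exact indicator_of_mem hx h
  have h3 : H β - U β = H α - U α := hwβ.trans hwα.symm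
  rw [← hUβ]
  linarith [h3]

/-- The change of variables formula for Riemann-type integrable data. -/
lemma subst_core {φ φ' u : ℝ → ℝ} {α β : ℝ} {M K : ℝ} (hαβ : α ≤ β)
    (hφc : ContinuousOn φ (Icc α β))
    (hφd : ∀ t ∈ Ioo α β, HasDerivAt φ (φ' t) t)
    (hub : ∀ x ∈ φ '' Icc α β, |u x| ≤ M)
    (huc : ∀ᵐ x ∂(volume.restrict (φ '' Icc α β)),
      ContinuousWithinAt u (φ '' Icc α β) x)
    (hhb : ∀ t ∈ Icc α β, |u (φ t) * φ' t| ≤ K)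
    (hhc : ∀ᵐ t ∂(volume.restrict (Icc α β)),
      ContinuousWithinAt (fun t => u (φ t) * φ' t) (Icc α β) t) :
    ∫ x in (φ α)..(φ β), u x = ∫ t in α..β, u (φ t) * φ' t := by
  rcases eq_or_lt_of_le hαβ with rfl | hlt
  · simp
  have hαI : α ∈ Icc α β := ⟨le_refl _, hαβ⟩
  have hβI : β ∈ Icc α β := ⟨hαβ, le_refl _⟩
  set S := φ '' Icc α β with hSdef
  have hSne : S.Nonempty := ⟨φ α, mem_image_of_mem φ hαI⟩
  have hScomp : IsCompact S := isCompact_Icc.image_of_continuousOn hφc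
  have hSm : MeasurableSet S := hScomp.measurableSet
  have hSconn : S.OrdConnected := ((isPreconnected_Icc).image φ hφc).ordConnected
  haveI : IsFiniteMeasure (volume.restrict S) := by
    constructor
    rw [Measure.restrict_apply_univ]
    exact hScomp.measure_lt_top
  set ub := S.indicator u with hubdef
  have hub_int : Integrable ub volume :=
    (integrable_indicator_iff hSm).2 (integrableOn_of_bdd_ae_cont hSm hub huc)
  have hub_ii : ∀ a b : ℝ, IntervalIntegrable ub volume a b := fun a b =>
    hub_int.intervalIntegrable
  have hMnn : 0 ≤ M := le_trans (abs_nonneg _) (hub (φ α) ⟨α, hαI, rfl⟩)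
  have hubbdd : ∀ x, |ub x| ≤ M := by
    intro x
    by_cases hx : x ∈ S
    · rw [hubdef, indicator_of_mem hx]; exact hub x hx
    · rw [hubdef, indicator_of_notMem hx, abs_zero]; exact hMnn
  set F := fun x : ℝ => ∫ y in (φ α)..x, ub y with hFdef
  have Fcont : Continuous F := intervalIntegral.continuous_primitive hub_ii (φ α)
  have Flip : ∀ a b : ℝ, |F b - F a| ≤ M * |b - a| := by
    intro a b
    have he : F b - F a = ∫ x in a..b, ub x :=
      intervalIntegral.integral_interval_sub_left (hub_ii _ b) (hub_ii _ a)
    rw [he]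
    have := intervalIntegral.norm_integral_le_of_norm_le_const
      (C := M) (f := ub) (a := a) (b := b) (fun x _ => by
        simpa [Real.norm_eq_abs] using hubbdd x)
    simpa [Real.norm_eq_abs] using this
  -- derivative of F a.e. on S
  set N := {x | x ∈ S ∧ ¬ HasDerivAt F (u x) x} with hNdef
  have hNnull : volume N = 0 := by
    have hnull2 : volume {x | x ∈ S ∧ ¬ ContinuousWithinAt u S x} = 0 := by
      have h0 := ae_iff.mp huc
      rw [Measure.restrict_apply' hSm] at h0
      refine measure_mono_null (fun x hx => ?_) h0
      exact ⟨hx.2, hx.1⟩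
    have hsub : N ⊆ ({sInf S, sSup S} : Set ℝ) ∪ {x | x ∈ S ∧ ¬ ContinuousWithinAt u S x} := by
      intro x hx
      rw [mem_union] at *
      by_contra hcon
      rw [not_or] at hcon
      obtain ⟨hnotends, hnotbad⟩ := hcon
      simp only [mem_insert_iff, mem_singleton_iff, not_or] at hnotends
      have hxS : x ∈ S := hx.1
      have hcwa : ContinuousWithinAt u S x := by
        by_contra hc
        exact hnotbad ⟨hxS, hc⟩
      have hlow : sInf S < x :=
        lt_of_le_of_ne (csInf_le hScomp.bddBelow hxS) (Ne.symm hnotends.1)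
      have hhigh : x < sSup S :=
        lt_of_le_of_ne (le_csSup hScomp.bddAbove hxS) hnotends.2
      have hSnhds : S ∈ 𝓝 x := by
        refine mem_of_superset (Icc_mem_nhds hlow hhigh) ?_
        exact hSconn.out (hScomp.sInf_mem hSne) (hScomp.sSup_mem hSne)
      have hca : ContinuousAt u x := hcwa.continuousAt hSnhds
      have heq : ub =ᶠ[𝓝 x] u := eventually_of_mem hSnhds (fun y hy => indicator_of_mem hy u)
      have hca' : ContinuousAt ub x := hca.congr heq.symm
      have hsmf : StronglyMeasurableAtFilter ub (𝓝 x) volume :=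
        ⟨univ, univ_mem, by rw [Measure.restrict_univ]; exact hub_int.aestronglyMeasurable⟩
      have hd := intervalIntegral.integral_hasDerivAt_right (hub_ii (φ α) x) hsmf hca'
      have hux : ub x = u x := indicator_of_mem hxS u
      rw [hux] at hd
      exact hx.2 hd
    refine measure_mono_null hsub (measure_union_null ?_ hnull2)
    exact (Set.toFinite _).measure_zero volume
  set H := fun t : ℝ => F (φ t) with hHdef
  set h := fun t : ℝ => u (φ t) * φ' t with hhdef
  -- zero-derivative points
  have hlip0 : ∀ t, HasDerivAt φ 0 t → HasDerivAt H 0 t := by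
    intro t hd0
    rw [hasDerivAt_iff_isLittleO]
    have h1 := hasDerivAt_iff_isLittleO.mp hd0
    simp only [smul_zero, sub_zero] at h1 ⊢
    have h2 : (fun s => H s - H t) =O[𝓝 t] (fun s => φ s - φ t) := by
      refine Asymptotics.IsBigO.of_bound M (Eventually.of_forall fun s => ?_)
      simpa [Real.norm_eq_abs] using Flip (φ t) (φ s)
    exact h2.trans_isLittleO h1
  -- a.e. derivative of H
  have hder : ∀ᵐ t, t ∈ Ioo α β → HasDerivAt H (h t) t := by
    have hsv := sv_null (A := {t | t ∈ Ioo α β ∧ φ t ∈ N}) (N := N) (φ := φ) (φ' := φ')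
      (fun t ht => hφd t ht.1) hNnull (fun t ht => ht.2)
    rw [ae_iff]
    refine measure_mono_null ?_ hsv
    intro t ht
    simp only [mem_setOf_eq] at ht ⊢
    push_neg at ht
    obtain ⟨htIoo, hnd⟩ := ht
    have htIcc : t ∈ Icc α β := Ioo_subset_Icc_self htIoo
    by_cases h1 : φ' t = 0
    · exfalso
      have := hlip0 t (h1 ▸ hφd t htIoo)
      apply hnd
      have hzero : h t = 0 := by rw [hhdef]; simp [h1]
      rw [hzero]
      exact this
    by_cases h2 : φ t ∈ N
    · exact ⟨⟨htIoo, h2⟩, h1⟩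
    · exfalso
      have hxS : φ t ∈ S := mem_image_of_mem φ htIcc
      have hF : HasDerivAt F (u (φ t)) (φ t) := by
        by_contra hc
        exact h2 ⟨hxS, hc⟩
      have := HasDerivAt.comp t hF (hφd t htIoo)
      exact hnd this
  -- pointwise Lipschitz estimate
  have hptw : ∀ t ∈ Ioo α β, ∃ C : ℝ, ∃ δ > (0:ℝ), ∀ s, |s - t| < δ →
      |H s - H t| ≤ C * |s - t| := by
    intro t ht
    have h1 := (hasDerivAt_iff_isLittleO.mp (hφd t ht)).def one_pos
    rw [Metric.eventually_nhds_iff] at h1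
    obtain ⟨δ, hδ, hball⟩ := h1
    refine ⟨M * (|φ' t| + 1), δ, hδ, fun s hs => ?_⟩
    have h2 : |φ s - φ t| ≤ (|φ' t| + 1) * |s - t| := by
      have hb := hball (show dist s t < δ by rwa [Real.dist_eq])
      simp only [smul_eq_mul, Real.norm_eq_abs, one_mul] at hb
      have tri : |φ s - φ t| ≤ |φ s - φ t - (s - t) * φ' t| + |(s - t) * φ' t| := by
        have := abs_add_le (φ s - φ t - (s - t) * φ' t) ((s - t) * φ' t)
        simpa using this
      rw [abs_mul] at tri
      nlinarith [abs_nonneg (s - t), abs_nonneg (φ' t)]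
    calc |H s - H t| ≤ M * |φ s - φ t| := Flip (φ t) (φ s)
      _ ≤ M * ((|φ' t| + 1) * |s - t|) := mul_le_mul_of_nonneg_left h2 hMnn
      _ = M * (|φ' t| + 1) * |s - t| := by ring
  have Hcont : ContinuousOn H (Icc α β) := Fcont.comp_continuousOn hφc
  have hmain := ftc_ae hlt Hcont hhb hhc hder hptw
  have hcongr : ∫ x in (φ α)..(φ β), u x = ∫ x in (φ α)..(φ β), ub x := by
    refine intervalIntegral.integral_congr fun x hx => ?_
    have hxS : x ∈ S :=
      hSconn.uIcc_subset (mem_image_of_mem φ hαI) (mem_image_of_mem φ hβI) hx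
    exact (indicator_of_mem hxS u).symm
  rw [hcongr, hmain]
  have h0 : F (φ α) = 0 := intervalIntegral.integral_same
  show (∫ x in (φ α)..(φ β), ub x) = F (φ β) - F (φ α)
  rw [h0, sub_zero]

/-- A function is Riemann integrable on a set (Lebesgue criterion): it is bounded
on the set and continuous (within the set) at almost every point of the set. -/
def RiemannIntegrableOn (f : ℝ → ℝ) (s : Set ℝ) : Prop :=
  (∃ M, ∀ x ∈ s, |f x| ≤ M) ∧
  ∀ᵐ x ∂(volume.restrict s), ContinuousWithinAt f s x

theorem stmt12 (I : Set ℝ) (hI : I.OrdConnected) (f : ℝ → ℝ) (α β : ℝ) (hαβ : α ≤ β)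
    (φ φ' : ℝ → ℝ) (hmap : ∀ t ∈ Set.Icc α β, φ t ∈ I)
    (hφc : ContinuousOn φ (Set.Icc α β))
    (hφd : ∀ t ∈ Set.Ioo α β, HasDerivAt φ (φ' t) t)
    (hφ'c : ∀ᵐ t, t ∈ Set.Ioo α β → ContinuousWithinAt φ' (Set.Ioo α β) t)
    (hf : RiemannIntegrableOn f I)
    (hprod : RiemannIntegrableOn (fun t => f (φ t) * φ' t) (Set.Icc α β))
    (hpre : volume {t ∈ Set.Icc α β | φ t = φ α ∨ φ t = φ β} = 0)
    (g : ℝ → ℝ)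
    (hg : ∀ x ∈ I, g x = Set.indicator (Set.uIcc (φ α) (φ β)) f x) :
    RiemannIntegrableOn (fun t => g (φ t) * φ' t) (Set.Icc α β) ∧
    ∫ x in (φ α)..(φ β), g x = ∫ x in (φ α)..(φ β), f x ∧
    ∫ x in (φ α)..(φ β), f x = ∫ t in α..β, f (φ t) * φ' t ∧
    ∫ t in α..β, f (φ t) * φ' t = ∫ t in α..β, g (φ t) * φ' t := by
  obtain ⟨⟨M, hM⟩, hfc⟩ := hf
  obtain ⟨⟨K, hK⟩, hpc⟩ := hprod
  have hαI : α ∈ Icc α β := ⟨le_refl _, hαβ⟩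
  have hβI : β ∈ Icc α β := ⟨hαβ, le_refl _⟩
  have hφαI : φ α ∈ I := hmap α hαI
  have hφβI : φ β ∈ I := hmap β hβI
  set J := uIcc (φ α) (φ β) with hJdef
  have hJI : J ⊆ I := hI.uIcc_subset hφαI hφβI
  have hgJ : ∀ x ∈ J, g x = f x := fun x hx => by
    rw [hg x (hJI hx)]; exact indicator_of_mem hx f
  have hgO : ∀ x ∈ I, x ∉ J → g x = 0 := fun x hxI hxJ => by
    rw [hg x hxI]; exact indicator_of_notMem hxJ f
  have hMnn : 0 ≤ M := le_trans (abs_nonneg _) (hM (φ α) hφαI)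
  have hKnn : 0 ≤ K := le_trans (abs_nonneg _) (hK α hαI)
  have hIm : MeasurableSet (Icc α β) := measurableSet_Icc
  -- S and its properties
  set S := φ '' Icc α β with hSdef
  have hSsubI : S ⊆ I := by rintro x ⟨t, ht, rfl⟩; exact hmap t ht
  have hScomp : IsCompact S := isCompact_Icc.image_of_continuousOn hφc
  have hSm : MeasurableSet S := hScomp.measurableSet
  have hJS : J ⊆ S := by
    have h1 : φ α ∈ S := mem_image_of_mem φ hαI
    have h2 : φ β ∈ S := mem_image_of_mem φ hβI
    exact (((isPreconnected_Icc).image φ hφc).ordConnected).uIcc_subset h1 h2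
  -- bound for g ∘ φ * φ'
  have hgb : ∀ t ∈ Icc α β, |g (φ t) * φ' t| ≤ K := by
    intro t ht
    by_cases hx : φ t ∈ J
    · have : g (φ t) = f (φ t) := hgJ _ hx
      rw [this]; exact hK t ht
    · have : g (φ t) = 0 := hgO _ (hmap t ht) hx
      rw [this, zero_mul, abs_zero]; exact hKnn
  -- a.e. exclusion of endpoint values
  have hpre' : ∀ᵐ t ∂(volume.restrict (Icc α β)), ¬(φ t = φ α ∨ φ t = φ β) := by
    rw [ae_iff]
    rw [Measure.restrict_apply' hIm]
    refine measure_mono_null (fun x hx => ?_) hpre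
    simp only [not_not, mem_inter_iff, mem_setOf_eq] at hx ⊢
    exact ⟨hx.2, hx.1⟩
  -- interiority of non-endpoint points of J
  have hJint : ∀ x ∈ J, x ≠ φ α → x ≠ φ β → J ∈ 𝓝 x := by
    intro x hx hne1 hne2
    have h1 : (φ α) ⊓ (φ β) < x := by
      refine lt_of_le_of_ne hx.1 ?_
      rcases min_cases (φ α) (φ β) with ⟨h, _⟩ | ⟨h, _⟩ <;> rw [h]
      · exact fun hh => hne1 hh.symm
      · exact fun hh => hne2 hh.symm
    have h2 : x < (φ α) ⊔ (φ β) := by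
      refine lt_of_le_of_ne hx.2 ?_
      rcases max_cases (φ α) (φ β) with ⟨h, _⟩ | ⟨h, _⟩ <;> rw [h]
      · exact hne1
      · exact hne2
    exact Icc_mem_nhds h1 h2
  -- Part 1: a.e. continuity of g ∘ φ * φ' on Icc
  have hgc : ∀ᵐ t ∂(volume.restrict (Icc α β)),
      ContinuousWithinAt (fun t => g (φ t) * φ' t) (Icc α β) t := by
    filter_upwards [hpc, hpre', ae_restrict_mem hIm] with t hct hnet htI
    have hφcwa : ContinuousWithinAt φ (Icc α β) t := hφc t htI
    push_neg at hnet
    by_cases hxJ : φ t ∈ J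
    · have hnhds : J ∈ 𝓝 (φ t) := hJint _ hxJ hnet.1 hnet.2
      have hev : ∀ᶠ s in 𝓝[Icc α β] t, φ s ∈ J := hφcwa.eventually_mem hnhds
      refine hct.congr_of_eventuallyEq ?_ ?_
      · filter_upwards [hev] with s hs
        rw [hgJ _ hs]
      · rw [hgJ _ hxJ]
    · have hnhds : Jᶜ ∈ 𝓝 (φ t) := (isClosed_Icc.isOpen_compl).mem_nhds hxJ
      have hev : ∀ᶠ s in 𝓝[Icc α β] t, φ s ∈ Jᶜ := hφcwa.eventually_mem hnhds
      refine ContinuousWithinAt.congr_of_eventuallyEq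
        (continuousWithinAt_const : ContinuousWithinAt (fun _ => (0:ℝ)) (Icc α β) t) ?_ ?_
      · filter_upwards [hev, eventually_mem_nhdsWithin] with s hs hsI
        rw [hgO _ (hmap s hsI) hs, zero_mul]
      · rw [hgO _ (hmap t htI) hxJ, zero_mul]
  have part1 : RiemannIntegrableOn (fun t => g (φ t) * φ' t) (Icc α β) := ⟨⟨K, hgb⟩, hgc⟩
  -- substitution for f
  have hubf : ∀ x ∈ S, |f x| ≤ M := fun x hx => hM x (hSsubI hx)
  have hrSI : volume.restrict S ≤ volume.restrict I := Measure.restrict_mono hSsubI le_rfl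
  have hucf : ∀ᵐ x ∂(volume.restrict S), ContinuousWithinAt f S x := by
    filter_upwards [ae_mono hrSI hfc] with x hx
    exact hx.mono hSsubI
  have eq3 : ∫ x in (φ α)..(φ β), f x = ∫ t in α..β, f (φ t) * φ' t :=
    subst_core hαβ hφc hφd hubf hucf hK hpc
  -- substitution for g
  have hubg : ∀ x ∈ S, |g x| ≤ M := by
    intro x hx
    by_cases hxJ : x ∈ J
    · rw [hgJ _ hxJ]; exact hM x (hSsubI hx)
    · rw [hgO _ (hSsubI hx) hxJ, abs_zero]; exact hMnn
  have hpairnull : ∀ᵐ x ∂(volume.restrict S), x ≠ φ α ∧ x ≠ φ β := by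
    rw [ae_iff]
    have hcalc : (volume.restrict S) ({φ α, φ β} : Set ℝ) = 0 := by
      rw [Measure.restrict_apply' hSm]
      refine le_antisymm (le_trans (measure_mono inter_subset_left) ?_) zero_le
      exact le_of_eq ((Set.toFinite ({φ α, φ β} : Set ℝ)).measure_zero volume)
    refine measure_mono_null (fun x hx => ?_) hcalc
    simp only [mem_setOf_eq, not_and_or, not_not] at hx
    rcases hx with h | h <;> simp [h]
  have hucg : ∀ᵐ x ∂(volume.restrict S), ContinuousWithinAt g S x := by
    filter_upwards [hucf, hpairnull, ae_restrict_mem hSm] with x hcf hne hxS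
    by_cases hxJ : x ∈ J
    · have hnhds : J ∈ 𝓝 x := hJint _ hxJ hne.1 hne.2
      refine hcf.congr_of_eventuallyEq ?_ (hgJ _ hxJ)
      filter_upwards [mem_nhdsWithin_of_mem_nhds hnhds] with y hyJ
      exact hgJ _ hyJ
    · have hnhds : Jᶜ ∈ 𝓝 x := isClosed_Icc.isOpen_compl.mem_nhds hxJ
      refine ContinuousWithinAt.congr_of_eventuallyEq
        (continuousWithinAt_const : ContinuousWithinAt (fun _ => (0:ℝ)) S x) ?_ ?_
      · filter_upwards [eventually_mem_nhdsWithin,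
          mem_nhdsWithin_of_mem_nhds hnhds] with y hyS hyJ
        exact hgO _ (hSsubI hyS) hyJ
      · exact hgO _ (hSsubI hxS) hxJ
  have eq_g : ∫ x in (φ α)..(φ β), g x = ∫ t in α..β, g (φ t) * φ' t :=
    subst_core hαβ hφc hφd hubg hucg hgb hgc
  have eq2 : ∫ x in (φ α)..(φ β), g x = ∫ x in (φ α)..(φ β), f x :=
    intervalIntegral.integral_congr fun x hx => hgJ x hx
  refine ⟨part1, eq2, eq3, ?_⟩
  rw [← eq3, ← eq_g, eq2]
end

section
/- Let φ : [α,β] → I ⊆ ℝ be continuous and let J be the closed interval with endpoints φ(α), φ(β). If the set φ⁻¹({φ(α), φ(β)}) has Lebesgue measure zero, then the characteristic function of φ⁻¹(J), as a function on [α,β], is Riemann integrable; more precisely, its set of discontinuity points is contained in φ⁻¹({φ(α), φ(β)}). -/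
open MeasureTheory Set Filter Topology intervalIntegral

lemma indicator_continuousAt_of_not_frontier {s : Set ℝ} {x : ℝ} (h : x ∉ frontier s) :
    ContinuousAt (s.indicator (fun _ => (1 : ℝ))) x := by
  rw [frontier, Set.mem_diff, not_and_or, not_not] at h
  rcases h with h | h
  · -- x not in closure s : indicator is eventually 0
    have hx : ∀ᶠ y in 𝓝 x, y ∈ (closure s)ᶜ :=
      (isClosed_closure.isOpen_compl).eventually_mem h
    have : ∀ᶠ y in 𝓝 x, s.indicator (fun _ => (1 : ℝ)) y = 0 := by
      filter_upwards [hx] with y hy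
      exact Set.indicator_of_notMem (fun hmem => hy (subset_closure hmem)) _
    exact (continuousAt_const (y := (0 : ℝ))).congr
      (this.mono fun y hy => hy.symm ▸ rfl)
  · -- x in interior s : indicator is eventually 1
    have hx : ∀ᶠ y in 𝓝 x, y ∈ interior s := isOpen_interior.eventually_mem h
    have : ∀ᶠ y in 𝓝 x, s.indicator (fun _ => (1 : ℝ)) y = 1 := by
      filter_upwards [hx] with y hy
      exact Set.indicator_of_mem (interior_subset hy) _
    exact (continuousAt_const (y := (1 : ℝ))).congr
      (this.mono fun y hy => hy.symm ▸ rfl)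

theorem stmt13 (I : Set ℝ) (hI : I.OrdConnected) (α β : ℝ) (hαβ : α ≤ β) (φ : ℝ → ℝ)
    (hmap : ∀ t ∈ Set.Icc α β, φ t ∈ I)
    (hφc : ContinuousOn φ (Set.Icc α β))
    (hpre : volume {t ∈ Set.Icc α β | φ t = φ α ∨ φ t = φ β} = 0) :
    {t ∈ Set.Icc α β | ¬ ContinuousWithinAt
        (fun s => Set.indicator (Set.uIcc (φ α) (φ β)) (fun _ => (1 : ℝ)) (φ s)) (Set.Icc α β) t}
      ⊆ {t ∈ Set.Icc α β | φ t = φ α ∨ φ t = φ β} ∧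
    RiemannIntegrableOn (fun s => Set.indicator (Set.uIcc (φ α) (φ β)) (fun _ => (1 : ℝ)) (φ s))
      (Set.Icc α β) := by
  have key : ∀ t ∈ Set.Icc α β, ¬(φ t = φ α ∨ φ t = φ β) →
      ContinuousWithinAt (fun s => Set.indicator (Set.uIcc (φ α) (φ β))
        (fun _ => (1 : ℝ)) (φ s)) (Set.Icc α β) t := by
    intro t ht hne
    push_neg at hne
    have hfr : φ t ∉ frontier (Set.uIcc (φ α) (φ β)) := by
      intro hmem
      have : frontier (Set.uIcc (φ α) (φ β)) ⊆ {φ α, φ β} := by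
        rw [Set.uIcc, frontier_Icc inf_le_sup]
        intro x hx
        rcases hx with hx | hx <;> subst hx <;>
          rcases le_total (φ α) (φ β) with h' | h' <;> simp [h']
      rcases this hmem with h | h
      · exact hne.1 h
      · exact hne.2 h
    exact (indicator_continuousAt_of_not_frontier hfr).comp_continuousWithinAt (hφc t ht)
  have hsub : {t ∈ Set.Icc α β | ¬ ContinuousWithinAt
        (fun s => Set.indicator (Set.uIcc (φ α) (φ β)) (fun _ => (1 : ℝ)) (φ s)) (Set.Icc α β) t}
      ⊆ {t ∈ Set.Icc α β | φ t = φ α ∨ φ t = φ β} := by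
    intro t ⟨ht, hnc⟩
    refine ⟨ht, ?_⟩
    by_contra hne
    exact hnc (key t ht hne)
  refine ⟨hsub, ⟨1, fun x _ => ?_⟩, ?_⟩
  · by_cases h : φ x ∈ Set.uIcc (φ α) (φ β) <;> simp [Set.indicator_apply, h]
  · rw [MeasureTheory.ae_iff]
    rw [Measure.restrict_apply' measurableSet_Icc]
    refine le_antisymm (le_trans (measure_mono ?_) hpre.le) (zero_le)
    intro t ⟨hnc, ht⟩
    exact hsub ⟨ht, hnc⟩
end

section
/- For every bounded nonnegative function f : [a,b] → [0,∞), there exists a sequence of continuous, piecewise linear functions fₙ : [a,b] → [0,∞) with 0 ≤ fₙ ≤ f for all n, such that fₙ(p) → f(p) at every point p where f is continuous. -/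
open MeasureTheory Set Filter Topology intervalIntegral

/-- `g` is continuous piecewise linear on `[a, b]`: there is a finite partition of
`[a, b]` such that `g` is affine on each subinterval. -/
def PiecewiseLinearOn (g : ℝ → ℝ) (a b : ℝ) : Prop :=
  ∃ n : ℕ, ∃ x : ℕ → ℝ, x 0 = a ∧ x n = b ∧ (∀ i < n, x i ≤ x (i + 1)) ∧
    ∀ i < n, ∃ c d : ℝ, ∀ t ∈ Set.Icc (x i) (x (i + 1)), g t = c * t + d

namespace Stmt15Aux

noncomputable def xpt (a b : ℝ) (n i : ℕ) : ℝ := a + i * ((b - a) / 2 ^ n)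

def vS (a b : ℝ) (n j : ℕ) : Set ℝ :=
  Set.Icc a b ∩ Set.Icc (xpt a b n (j - 1)) (xpt a b n (j + 1))

noncomputable def vval (a b : ℝ) (f : ℝ → ℝ) (n j : ℕ) : ℝ := sInf (f '' vS a b n j)

noncomputable def idx (a b : ℝ) (n : ℕ) (t : ℝ) : ℕ := ⌊(t - a) / ((b - a) / 2 ^ n)⌋₊

noncomputable def Fn (a b : ℝ) (f : ℝ → ℝ) (n : ℕ) (t : ℝ) : ℝ :=
  vval a b f n (idx a b n t) +
    ((t - xpt a b n (idx a b n t)) / ((b - a) / 2 ^ n)) *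
      (vval a b f n (idx a b n t + 1) - vval a b f n (idx a b n t))

section

variable {a b t : ℝ} {f : ℝ → ℝ} {n i j : ℕ}

lemma hpos (hab : a < b) : 0 < (b - a) / 2 ^ n :=
  div_pos (by linarith) (by positivity)

lemma xpt_mono (hab : a < b) (hij : i ≤ j) : xpt a b n i ≤ xpt a b n j := by
  have h := hpos (n := n) hab
  have hc : (i : ℝ) ≤ j := Nat.cast_le.2 hij
  unfold xpt; nlinarith

lemma xpt_zero : xpt a b n 0 = a := by simp [xpt]

lemma xpt_top : xpt a b n (2 ^ n) = b := by
  have h2 : ((2 : ℝ)) ^ n ≠ 0 := by positivity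
  unfold xpt; push_cast; field_simp; ring

lemma a_le_xpt (hab : a < b) : a ≤ xpt a b n i := by
  have h := hpos (n := n) hab
  have h0 : 0 ≤ (i : ℝ) * ((b - a) / 2 ^ n) := mul_nonneg (Nat.cast_nonneg i) h.le
  unfold xpt; linarith

lemma xpt_le_b (hab : a < b) (hi : i ≤ 2 ^ n) : xpt a b n i ≤ b :=
  (xpt_mono hab hi).trans_eq xpt_top

lemma vS_nonempty (hab : a < b) (hj : j ≤ 2 ^ n + 1) : (vS a b n j).Nonempty :=
  ⟨min (xpt a b n j) b,
    ⟨le_min (a_le_xpt hab) hab.le, min_le_right _ _⟩,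
    le_min (xpt_mono hab (Nat.sub_le j 1)) (xpt_le_b hab (Nat.sub_le_iff_le_add.mpr hj)),
    (min_le_left _ _).trans (xpt_mono hab (Nat.le_succ j))⟩

lemma bdd (hf0 : ∀ x ∈ Set.Icc a b, 0 ≤ f x) : BddBelow (f '' vS a b n j) := by
  refine ⟨0, ?_⟩; rintro y ⟨q, hq, rfl⟩; exact hf0 q hq.1

lemma vval_nonneg (hab : a < b) (hf0 : ∀ x ∈ Set.Icc a b, 0 ≤ f x)
    (hj : j ≤ 2 ^ n + 1) : 0 ≤ vval a b f n j :=
  le_csInf ((vS_nonempty hab hj).image f) (by rintro y ⟨q, hq, rfl⟩; exact hf0 q hq.1)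

lemma vval_le {q : ℝ} (hf0 : ∀ x ∈ Set.Icc a b, 0 ≤ f x) (hq : q ∈ vS a b n j) :
    vval a b f n j ≤ f q :=
  csInf_le (bdd hf0) ⟨q, hq, rfl⟩

lemma idx_spec (hab : a < b) (ht : t ∈ Set.Icc a b) :
    xpt a b n (idx a b n t) ≤ t ∧ t < xpt a b n (idx a b n t + 1) ∧ idx a b n t ≤ 2 ^ n := by
  have h := hpos (n := n) hab
  have h0 : 0 ≤ (t - a) / ((b - a) / 2 ^ n) := div_nonneg (by linarith [ht.1]) h.le
  have hfl : (idx a b n t : ℝ) ≤ (t - a) / ((b - a) / 2 ^ n) := Nat.floor_le h0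
  have hfl2 : (t - a) / ((b - a) / 2 ^ n) < idx a b n t + 1 := Nat.lt_floor_add_one _
  have e1 : (idx a b n t : ℝ) * ((b - a) / 2 ^ n) ≤ t - a := (le_div_iff₀ h).1 hfl
  have e2 : t - a < ((idx a b n t : ℝ) + 1) * ((b - a) / 2 ^ n) := by
    have := (div_lt_iff₀ h).1 hfl2; linarith
  refine ⟨by unfold xpt; linarith, by unfold xpt; push_cast; linarith, ?_⟩
  have hle : (t - a) / ((b - a) / 2 ^ n) ≤ ((2 ^ n : ℕ) : ℝ) := by
    push_cast
    rw [div_le_iff₀ h]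
    have he : (2 : ℝ) ^ n * ((b - a) / 2 ^ n) = b - a := by field_simp
    rw [he]; linarith [ht.2]
  calc idx a b n t ≤ ⌊((2 ^ n : ℕ) : ℝ)⌋₊ := Nat.floor_le_floor hle
  _ = 2 ^ n := Nat.floor_natCast _

lemma mem_vS_idx (hab : a < b) (ht : t ∈ Set.Icc a b) : t ∈ vS a b n (idx a b n t) := by
  obtain ⟨h1, h2, _⟩ := idx_spec (n := n) hab ht
  exact ⟨ht, (xpt_mono hab (Nat.sub_le _ 1)).trans h1, h2.le⟩

lemma mem_vS_idx_succ (hab : a < b) (ht : t ∈ Set.Icc a b) :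
    t ∈ vS a b n (idx a b n t + 1) := by
  obtain ⟨h1, h2, _⟩ := idx_spec (n := n) hab ht
  refine ⟨ht, ?_, h2.le.trans (xpt_mono hab (Nat.le_succ _))⟩
  simpa using h1

lemma theta_mem (hab : a < b) (ht : t ∈ Set.Icc a b) :
    0 ≤ (t - xpt a b n (idx a b n t)) / ((b - a) / 2 ^ n) ∧
      (t - xpt a b n (idx a b n t)) / ((b - a) / 2 ^ n) ≤ 1 := by
  obtain ⟨h1, h2, _⟩ := idx_spec (n := n) hab ht
  have h := hpos (n := n) hab
  refine ⟨div_nonneg (by linarith) h.le, ?_⟩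
  rw [div_le_one h]
  have he : xpt a b n (idx a b n t + 1) = xpt a b n (idx a b n t) + (b - a) / 2 ^ n := by
    unfold xpt; push_cast; ring
  rw [he] at h2; linarith

lemma Fn_ge (hab : a < b) (ht : t ∈ Set.Icc a b) {c : ℝ}
    (h0 : c ≤ vval a b f n (idx a b n t)) (h1 : c ≤ vval a b f n (idx a b n t + 1)) :
    c ≤ Fn a b f n t := by
  obtain ⟨hθ0, hθ1⟩ := theta_mem (n := n) hab ht
  unfold Fn
  nlinarith [mul_nonneg hθ0 (by linarith : (0:ℝ) ≤ vval a b f n (idx a b n t + 1) - c),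
    mul_nonneg (by linarith : (0:ℝ) ≤ 1 - (t - xpt a b n (idx a b n t)) / ((b - a) / 2 ^ n))
      (by linarith : (0:ℝ) ≤ vval a b f n (idx a b n t) - c)]

lemma Fn_le (hab : a < b) (ht : t ∈ Set.Icc a b) {c : ℝ}
    (h0 : vval a b f n (idx a b n t) ≤ c) (h1 : vval a b f n (idx a b n t + 1) ≤ c) :
    Fn a b f n t ≤ c := by
  obtain ⟨hθ0, hθ1⟩ := theta_mem (n := n) hab ht
  unfold Fn
  nlinarith [mul_nonneg hθ0 (by linarith : (0:ℝ) ≤ c - vval a b f n (idx a b n t + 1)),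
    mul_nonneg (by linarith : (0:ℝ) ≤ 1 - (t - xpt a b n (idx a b n t)) / ((b - a) / 2 ^ n))
      (by linarith : (0:ℝ) ≤ c - vval a b f n (idx a b n t))]

lemma Fn_bounds (hab : a < b) (hf0 : ∀ x ∈ Set.Icc a b, 0 ≤ f x)
    (ht : t ∈ Set.Icc a b) : 0 ≤ Fn a b f n t ∧ Fn a b f n t ≤ f t := by
  obtain ⟨_, _, h3⟩ := idx_spec (n := n) hab ht
  exact ⟨Fn_ge hab ht (vval_nonneg hab hf0 (Nat.le_succ_of_le h3))
      (vval_nonneg hab hf0 (Nat.succ_le_succ h3)),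
    Fn_le hab ht (vval_le hf0 (mem_vS_idx hab ht)) (vval_le hf0 (mem_vS_idx_succ hab ht))⟩

lemma Fn_affine (hab : a < b) (hi : i < 2 ^ n) :
    ∃ c d : ℝ, ∀ t ∈ Set.Icc (xpt a b n i) (xpt a b n (i + 1)),
      Fn a b f n t = c * t + d := by
  have h := hpos (n := n) hab
  have hne : (b - a) / 2 ^ n ≠ 0 := h.ne'
  have hx1 : xpt a b n (i + 1) = xpt a b n i + (b - a) / 2 ^ n := by
    unfold xpt; push_cast; ring
  refine ⟨(vval a b f n (i + 1) - vval a b f n i) / ((b - a) / 2 ^ n),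
    vval a b f n i - xpt a b n i * ((vval a b f n (i + 1) - vval a b f n i) / ((b - a) / 2 ^ n)),
    fun t ht => ?_⟩
  have hFn : Fn a b f n t = vval a b f n (idx a b n t) +
      ((t - xpt a b n (idx a b n t)) / ((b - a) / 2 ^ n)) *
        (vval a b f n (idx a b n t + 1) - vval a b f n (idx a b n t)) := rfl
  rcases ht.2.eq_or_lt with heq | hlt
  · have hidx : idx a b n t = i + 1 := by
      have he : (t - a) / ((b - a) / 2 ^ n) = ((i + 1 : ℕ) : ℝ) := by
        rw [heq]
        have hd : xpt a b n (i + 1) - a = ((i : ℝ) + 1) * ((b - a) / 2 ^ n) := by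
          unfold xpt; push_cast; ring
        rw [hd, mul_div_assoc, div_self hne, mul_one]; push_cast; ring
      unfold idx; rw [he, Nat.floor_natCast]
    rw [hFn, hidx, heq]
    simp only [sub_self, zero_div, zero_mul, add_zero]
    rw [hx1]
    generalize (b - a) / 2 ^ n = D at hne ⊢
    field_simp
    ring
  · have hta : 0 ≤ t - a := by
      have := a_le_xpt (n := n) (i := i) hab; linarith [ht.1]
    have hx0 : xpt a b n i = a + (i : ℝ) * ((b - a) / 2 ^ n) := rfl
    have hx1' : xpt a b n (i + 1) = a + ((i : ℝ) + 1) * ((b - a) / 2 ^ n) := by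
      unfold xpt; push_cast; ring
    have hidx : idx a b n t = i := by
      unfold idx
      rw [Nat.floor_eq_iff (div_nonneg hta h.le)]
      constructor
      · rw [le_div_iff₀ h]; linarith [ht.1, hx0]
      · push_cast
        rw [div_lt_iff₀ h]
        nlinarith [hlt, hx1']
    rw [hFn, hidx]
    generalize (b - a) / 2 ^ n = D at hne ⊢
    field_simp
    ring

lemma chain0 (x : ℕ → ℝ) (m : ℕ) (hmono : ∀ i < m, x i ≤ x (i + 1)) : x 0 ≤ x m := by
  induction m with
  | zero => exact le_rfl
  | succ k ih => exact (ih fun i hi => hmono i (by omega)).trans (hmono k (by omega))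

lemma continuousOn_union_closed {g : ℝ → ℝ} {s u : Set ℝ} (hsc : IsClosed s)
    (huc : IsClosed u) (hs : ContinuousOn g s) (hu : ContinuousOn g u) :
    ContinuousOn g (s ∪ u) := by
  intro x hx
  rcases hx with hx | hx
  · refine (hs x hx).union ?_
    by_cases hxu : x ∈ u
    · exact hu x hxu
    · exact continuousWithinAt_of_notMem_closure (by rwa [huc.closure_eq])
  · refine ContinuousWithinAt.union ?_ (hu x hx)
    by_cases hxs : x ∈ s
    · exact hs x hxs
    · exact continuousWithinAt_of_notMem_closure (by rwa [hsc.closure_eq])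

lemma glue (g : ℝ → ℝ) (x : ℕ → ℝ) (m : ℕ) (hmono : ∀ i < m, x i ≤ x (i + 1))
    (haff : ∀ i < m, ∃ c d : ℝ, ∀ t ∈ Set.Icc (x i) (x (i + 1)), g t = c * t + d) :
    ContinuousOn g (Set.Icc (x 0) (x m)) := by
  induction m with
  | zero =>
    rw [Set.Icc_self]
    intro y hy
    rw [Set.mem_singleton_iff] at hy
    subst hy
    exact continuousWithinAt_singleton
  | succ m ih =>
    have h1 : x 0 ≤ x m := chain0 x m fun i hi => hmono i (by omega)
    have h2 : x m ≤ x (m + 1) := hmono m (by omega)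
    rw [← Set.Icc_union_Icc_eq_Icc h1 h2]
    refine continuousOn_union_closed isClosed_Icc isClosed_Icc
      (ih (fun i hi => hmono i (by omega)) (fun i hi => haff i (by omega))) ?_
    obtain ⟨c, d, hcd⟩ := haff m (by omega)
    exact ContinuousOn.congr (Continuous.continuousOn (by continuity)) hcd

lemma Fn_contOn (hab : a < b) : ContinuousOn (Fn a b f n) (Set.Icc a b) := by
  have := glue (Fn a b f n) (xpt a b n) (2 ^ n)
    (fun i _ => xpt_mono hab (Nat.le_succ i)) (fun i hi => Fn_affine hab hi)
  rwa [xpt_zero, xpt_top] at this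

end

end Stmt15Aux

theorem stmt15 (a b : ℝ) (hab : a ≤ b) (f : ℝ → ℝ)
    (hf0 : ∀ x ∈ Set.Icc a b, 0 ≤ f x) (hbd : ∃ M, ∀ x ∈ Set.Icc a b, f x ≤ M) :
    ∃ F : ℕ → ℝ → ℝ,
      (∀ n, ContinuousOn (F n) (Set.Icc a b)) ∧
      (∀ n, PiecewiseLinearOn (F n) a b) ∧
      (∀ n, ∀ x ∈ Set.Icc a b, 0 ≤ F n x ∧ F n x ≤ f x) ∧
      ∀ p ∈ Set.Icc a b, ContinuousWithinAt f (Set.Icc a b) p →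
        Tendsto (fun n => F n p) atTop (𝓝 (f p)) := by
  rcases eq_or_lt_of_le hab with heq | hlt
  · subst heq
    refine ⟨fun _ _ => f a, fun n => continuousOn_const,
      fun n => ⟨0, fun _ => a, rfl, rfl, fun i hi => absurd hi (Nat.not_lt_zero i),
        fun i hi => absurd hi (Nat.not_lt_zero i)⟩, fun n x hx => ?_, fun p hp _ => ?_⟩
    · have hxa : x = a := le_antisymm hx.2 hx.1
      subst hxa
      exact ⟨hf0 x ⟨le_rfl, le_rfl⟩, le_rfl⟩
    · have hpa : p = a := le_antisymm hp.2 hp.1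
      subst hpa
      exact tendsto_const_nhds
  · refine ⟨Stmt15Aux.Fn a b f, fun n => Stmt15Aux.Fn_contOn hlt,
      fun n => ⟨2 ^ n, Stmt15Aux.xpt a b n, Stmt15Aux.xpt_zero, Stmt15Aux.xpt_top,
        fun i _ => Stmt15Aux.xpt_mono hlt (Nat.le_succ i),
        fun i hi => Stmt15Aux.Fn_affine hlt hi⟩,
      fun n x hx => Stmt15Aux.Fn_bounds hlt hf0 hx, ?_⟩
    intro p hp hcont
    rw [Metric.tendsto_atTop]
    intro ε hε
    rw [Metric.continuousWithinAt_iff] at hcont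
    obtain ⟨δ, hδ, hδ'⟩ := hcont (ε / 2) (by linarith)
    obtain ⟨N, hN⟩ := pow_unbounded_of_one_lt (3 * (b - a) / δ) (by norm_num : (1:ℝ) < 2)
    refine ⟨N, fun n hn => ?_⟩
    have h2mono : (2 : ℝ) ^ N ≤ 2 ^ n := pow_le_pow_right₀ (by norm_num) hn
    have hhn : (b - a) / 2 ^ n < δ / 3 := by
      rw [div_lt_div_iff₀ (by positivity) (by norm_num)]
      have := (div_lt_iff₀ hδ).1 hN
      nlinarith
    obtain ⟨h1, h2, h3⟩ := Stmt15Aux.idx_spec (n := n) hlt hp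
    have key : ∀ j, j ≤ 2 ^ n + 1 →
        p ∈ Set.Icc (Stmt15Aux.xpt a b n (j - 1)) (Stmt15Aux.xpt a b n (j + 1)) →
        f p - ε / 2 ≤ Stmt15Aux.vval a b f n j := by
      intro j hj hpmem
      apply le_csInf ((Stmt15Aux.vS_nonempty hlt hj).image f)
      rintro y ⟨q, hq, rfl⟩
      have hlen : Stmt15Aux.xpt a b n (j + 1) - Stmt15Aux.xpt a b n (j - 1) ≤
          2 * ((b - a) / 2 ^ n) := by
        have hc : ((j : ℝ) - 1) ≤ ((j - 1 : ℕ) : ℝ) := by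
          rcases j with _ | k
          · simp
          · push_cast [Nat.succ_sub_one]; ring_nf; rfl
        unfold Stmt15Aux.xpt
        push_cast
        nlinarith [Stmt15Aux.hpos (n := n) hlt]
      have hqd : dist q p < δ := by
        rw [Real.dist_eq, abs_sub_lt_iff]
        constructor
        · linarith [hq.2.2, hpmem.1]
        · linarith [hq.2.1, hpmem.2]
      have hfq := hδ' hq.1 hqd
      rw [Real.dist_eq] at hfq
      linarith [(abs_lt.1 hfq).1]
    have kv0 : f p - ε / 2 ≤ Stmt15Aux.vval a b f n (Stmt15Aux.idx a b n p) :=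
      key _ (Nat.le_succ_of_le h3)
        ⟨(Stmt15Aux.xpt_mono hlt (Nat.sub_le _ 1)).trans h1, h2.le⟩
    have kv1 : f p - ε / 2 ≤ Stmt15Aux.vval a b f n (Stmt15Aux.idx a b n p + 1) :=
      key _ (Nat.succ_le_succ h3)
        ⟨by simpa using h1, h2.le.trans (Stmt15Aux.xpt_mono hlt (Nat.le_succ _))⟩
    have hlow : f p - ε / 2 ≤ Stmt15Aux.Fn a b f n p := Stmt15Aux.Fn_ge hlt hp kv0 kv1
    have hup : Stmt15Aux.Fn a b f n p ≤ f p := (Stmt15Aux.Fn_bounds hlt hf0 hp).2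
    rw [Real.dist_eq]
    rw [abs_lt]
    constructor <;> linarith
end

section
/- Define φ : [0, 2/π] → ℝ by φ(t) = t·sin(1/t) for t > 0 and φ(0) = 0, and f(x) = x³. Then the function t ↦ f(φ(t))·φ'(t) = t³ sin³(1/t)·(sin(1/t) − (1/t)cos(1/t)) (defined arbitrarily at t = 0) is Riemann integrable on [0, 2/π], and ∫_0^{2/π} [φ(t)]³ φ'(t) dt = 4/π⁴, while φ' is unbounded on (0, 2/π) and hence not Riemann integrable on [0, 2/π]. -/
open MeasureTheory Set Filter Topology intervalIntegral

noncomputable def g : ℝ → ℝ := fun t => (t * Real.sin (1 / t)) ^ 3 *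
        (Real.sin (1 / t) - (1 / t) * Real.cos (1 / t))

lemma phi_cont : Continuous (fun t : ℝ => t * Real.sin (1 / t)) := by
  rw [continuous_iff_continuousAt]
  intro x
  rcases eq_or_ne x 0 with rfl | hx
  · have key : Tendsto (fun t : ℝ => t * Real.sin (1 / t)) (𝓝 0) (𝓝 0) := by
      apply squeeze_zero_norm (a := fun t : ℝ => |t|)
      · intro t
        calc ‖t * Real.sin (1/t)‖ = |t| * |Real.sin (1/t)| := abs_mul _ _
          _ ≤ |t| * 1 := by
              exact mul_le_mul_of_nonneg_left (Real.abs_sin_le_one _) (abs_nonneg t)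
          _ = |t| := mul_one _
      · have : Tendsto (abs : ℝ → ℝ) (𝓝 0) (𝓝 |(0:ℝ)|) := continuous_abs.tendsto 0
        simpa using this
    simpa [ContinuousAt] using key
  · exact continuousAt_id.mul
      (Real.continuous_sin.continuousAt.comp ((continuousAt_const.div continuousAt_id hx)))

lemma phi_deriv {x : ℝ} (hx : x ≠ 0) :
    HasDerivAt (fun t : ℝ => t * Real.sin (1 / t))
      (Real.sin (1/x) - (1/x) * Real.cos (1/x)) x := by
  have h1 : HasDerivAt (fun t : ℝ => 1 / t) (-(1/x^2)) x := by
    simpa [one_div] using (hasDerivAt_inv hx)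
  have h2 : HasDerivAt (fun t : ℝ => Real.sin (1/t)) (Real.cos (1/x) * (-(1/x^2))) x :=
    (Real.hasDerivAt_sin (1/x)).comp x h1
  have h3 := (hasDerivAt_id x).mul h2
  refine h3.congr_deriv ?_
  rw [id]
  field_simp
  ring

lemma g_contAt {x : ℝ} (hx : x ≠ 0) : ContinuousAt g x := by
  have h1 : ContinuousAt (fun t : ℝ => 1 / t) x := continuousAt_const.div continuousAt_id hx
  have hs : ContinuousAt (fun t : ℝ => Real.sin (1/t)) x :=
    Real.continuous_sin.continuousAt.comp h1
  have hc : ContinuousAt (fun t : ℝ => Real.cos (1/t)) x :=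
    Real.continuous_cos.continuousAt.comp h1
  exact ((continuousAt_id.mul hs).pow 3).mul (hs.sub (h1.mul hc))

lemma g_bound {t : ℝ} (ht : t ∈ Set.Icc (0:ℝ) (2 / Real.pi)) : |g t| ≤ 2 := by
  obtain ⟨h0, h2⟩ := ht
  rcases eq_or_lt_of_le h0 with rfl | hpos
  · simp [g]
  have ht1 : t ≤ 1 := by
    have : 2 / Real.pi ≤ 1 := by
      rw [div_le_one Real.pi_pos]
      linarith [Real.pi_gt_three]
    linarith
  have hb1 : |t * Real.sin (1/t)| ≤ t := by
    calc |t * Real.sin (1/t)| = |t| * |Real.sin (1/t)| := abs_mul _ _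
      _ ≤ |t| * 1 := mul_le_mul_of_nonneg_left (Real.abs_sin_le_one _) (abs_nonneg t)
      _ = t := by rw [mul_one, abs_of_pos hpos]
  have hb2 : |Real.sin (1/t) - (1/t) * Real.cos (1/t)| ≤ 1 + 1/t := by
    calc |Real.sin (1/t) - (1/t) * Real.cos (1/t)|
        ≤ |Real.sin (1/t)| + |(1/t) * Real.cos (1/t)| := abs_sub _ _
      _ ≤ 1 + 1/t := by
          gcongr
          · exact Real.abs_sin_le_one _
          · calc |(1/t) * Real.cos (1/t)| = |1/t| * |Real.cos (1/t)| := abs_mul _ _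
              _ ≤ |1/t| * 1 := mul_le_mul_of_nonneg_left (Real.abs_cos_le_one _) (abs_nonneg _)
              _ = 1/t := by rw [mul_one, abs_of_pos (by positivity)]
  have : |g t| ≤ t^3 * (1 + 1/t) := by
    unfold g
    rw [abs_mul, abs_pow]
    have := mul_le_mul (pow_le_pow_left₀ (abs_nonneg _) hb1 3) hb2 (abs_nonneg _)
      (by positivity)
    exact this
  have ht0 : t^3 * (1 + 1/t) = t^3 + t^2 := by field_simp
  nlinarith [pow_le_one₀ (le_of_lt hpos) ht1 (n := 3), pow_le_one₀ (le_of_lt hpos) ht1 (n := 2),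
    pow_pos hpos 3, pow_pos hpos 2]

noncomputable def F : ℝ → ℝ := fun t => (t * Real.sin (1/t))^4 / 4

lemma F_deriv {x : ℝ} (hx : x ≠ 0) : HasDerivAt F (g x) x := by
  have h := (((phi_deriv hx).pow 4).div_const 4)
  refine h.congr_deriv ?_
  unfold g
  ring

lemma g_meas : Measurable g := by
  unfold g
  fun_prop

lemma g_integrableOn : IntegrableOn g (Set.Icc (0:ℝ) (2/Real.pi)) volume := by
  apply Measure.integrableOn_of_bounded (M := 2)
  · exact (measure_Icc_lt_top).ne
  · exact g_meas.aestronglyMeasurable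
  · rw [ae_restrict_iff' measurableSet_Icc]
    exact Eventually.of_forall fun x hx => by simpa [Real.norm_eq_abs] using g_bound hx

lemma g_intervalIntegrable : IntervalIntegrable g volume 0 (2/Real.pi) := by
  rw [intervalIntegrable_iff_integrableOn_Icc_of_le (by positivity)]
  exact g_integrableOn

lemma integral_g : (∫ t in (0:ℝ)..(2/Real.pi), g t) = 4 / Real.pi ^ 4 := by
  have hab : (0:ℝ) ≤ 2 / Real.pi := by positivity
  have hcont : ContinuousOn F (Set.Icc 0 (2/Real.pi)) :=
    ((phi_cont.pow 4).div_const 4).continuousOn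
  have key := intervalIntegral.integral_eq_sub_of_hasDerivAt_of_le hab hcont
    (fun x hx => F_deriv (ne_of_gt hx.1)) g_intervalIntegrable
  rw [key]
  unfold F
  have hpi : Real.pi ≠ 0 := ne_of_gt Real.pi_pos
  rw [show (1 : ℝ) / (2/Real.pi) = Real.pi / 2 by field_simp]
  rw [Real.sin_pi_div_two]
  simp
  field_simp
  ring

lemma unbounded_deriv : ¬ ∃ M, ∀ t ∈ Set.Ioo (0 : ℝ) (2 / Real.pi),
    |Real.sin (1 / t) - (1 / t) * Real.cos (1 / t)| ≤ M := by
  rintro ⟨M, hM⟩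
  set n : ℕ := ⌈M⌉₊ + 1 with hn
  have hnpos : (0:ℝ) < n := by positivity
  have hpi := Real.pi_pos
  set x : ℝ := 1 / (↑n * (2 * Real.pi)) with hxdef
  have hxpos : 0 < x := by positivity
  have hxlt : x < 2 / Real.pi := by
    rw [hxdef, div_lt_div_iff₀ (by positivity) hpi]
    have h1 : (1:ℝ) ≤ n := by exact_mod_cast Nat.one_le_iff_ne_zero.2 (by omega)
    nlinarith
  have hinv : 1 / x = ↑n * (2 * Real.pi) := by
    rw [hxdef, one_div_one_div]
  have := hM x ⟨hxpos, hxlt⟩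
  have hsin : Real.sin (↑n * (2 * Real.pi)) = 0 := by
    have : (↑n * (2 * Real.pi) : ℝ) = (2 * n : ℤ) * Real.pi := by push_cast; ring
    rw [this, Real.sin_int_mul_pi]
  rw [hinv, hsin, Real.cos_nat_mul_two_pi] at this
  have habs : |(0:ℝ) - ↑n * (2 * Real.pi) * 1| = ↑n * (2 * Real.pi) := by
    rw [zero_sub, abs_neg, mul_one, abs_of_pos (by positivity)]
  rw [habs] at this
  have hMn : M < n := by
    calc M ≤ ⌈M⌉₊ := Nat.le_ceil M
      _ < n := by exact_mod_cast Nat.lt_succ_self _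
  have : (n:ℝ) * 1 < ↑n * (2 * Real.pi) :=
    mul_lt_mul_of_pos_left (by linarith [Real.pi_gt_three]) hnpos
  linarith

lemma ae_ne_zero : ∀ᵐ x ∂(volume.restrict (Set.Icc (0:ℝ) (2/Real.pi))), x ≠ (0:ℝ) := by
  rw [ae_iff]
  have hsub : {x : ℝ | ¬ x ≠ 0} ⊆ {(0:ℝ)} := by intro x hx; simpa using hx
  have : volume.restrict (Set.Icc (0:ℝ) (2/Real.pi)) {x : ℝ | ¬ x ≠ 0} ≤
      volume {(0:ℝ)} := le_trans (measure_mono hsub) (Measure.restrict_le_self _)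
  simpa using le_antisymm (by simpa using this) (zero_le _)

theorem stmt17 :
    RiemannIntegrableOn
      (fun t => (t * Real.sin (1 / t)) ^ 3 *
        (Real.sin (1 / t) - (1 / t) * Real.cos (1 / t)))
      (Set.Icc 0 (2 / Real.pi)) ∧
    (∫ t in (0 : ℝ)..(2 / Real.pi),
        (t * Real.sin (1 / t)) ^ 3 *
          (Real.sin (1 / t) - (1 / t) * Real.cos (1 / t))) = 4 / Real.pi ^ 4 ∧
    (¬ ∃ M, ∀ t ∈ Set.Ioo (0 : ℝ) (2 / Real.pi),
        |Real.sin (1 / t) - (1 / t) * Real.cos (1 / t)| ≤ M) ∧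
    ¬ RiemannIntegrableOn (fun t => Real.sin (1 / t) - (1 / t) * Real.cos (1 / t))
      (Set.Icc 0 (2 / Real.pi)) := by
  refine ⟨⟨⟨2, fun x hx => g_bound hx⟩, ?_⟩, integral_g, unbounded_deriv, ?_⟩
  · filter_upwards [ae_ne_zero] with x hx
    exact (g_contAt hx).continuousWithinAt
  · rintro ⟨⟨M, hM⟩, -⟩
    exact unbounded_deriv ⟨M, fun t ht => hM t (Set.Ioo_subset_Icc_self ht)⟩
end

section
/- Let φ : [0,1] → [0,1] be a strictly increasing homeomorphism whose derivative φ' exists everywhere, is bounded, and vanishes on a dense subset of [0,1] (a Pompeiu-type function). Then there is no function f : [0,1] → ℝ with f ≠ 0 almost everywhere such that both f and (f∘φ)·φ' are Riemann integrable on [0,1]. Equivalently: if f and (f∘φ)·φ' are both Riemann integrable on [0,1] for such a φ, then f = 0 on a set of positive measure. -/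
open MeasureTheory Set Filter Topology intervalIntegral

theorem stmt19 (φ φ' : ℝ → ℝ)
    (hmono : StrictMonoOn φ (Set.Icc 0 1))
    (hcont : ContinuousOn φ (Set.Icc 0 1))
    (hbij : Set.BijOn φ (Set.Icc (0 : ℝ) 1) (Set.Icc (0 : ℝ) 1))
    (hφ0 : φ 0 = 0) (hφ1 : φ 1 = 1)
    (hder : ∀ t ∈ Set.Icc (0 : ℝ) 1, HasDerivWithinAt φ (φ' t) (Set.Icc 0 1) t)
    (hbd : ∃ M, ∀ t ∈ Set.Icc (0 : ℝ) 1, |φ' t| ≤ M)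
    (D : Set ℝ) (hD : D ⊆ Set.Icc 0 1) (hDdense : Set.Icc (0 : ℝ) 1 ⊆ closure D)
    (hD0 : ∀ t ∈ D, φ' t = 0)
    (f : ℝ → ℝ)
    (hf : RiemannIntegrableOn f (Set.Icc 0 1))
    (hprod : RiemannIntegrableOn (fun t => f (φ t) * φ' t) (Set.Icc 0 1)) :
    0 < volume {x ∈ Set.Icc (0 : ℝ) 1 | f x = 0} := by
  by_contra hpos
  push_neg at hpos
  set N : Set ℝ := {x ∈ Set.Icc (0 : ℝ) 1 | f x = 0} with hNdef
  have hN : volume N = 0 := le_antisymm hpos zero_le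
  set g : ℝ → ℝ := fun t => f (φ t) * φ' t with hgdef
  -- Step A: g = 0 a.e. on Icc 0 1 (density of D where g vanishes, plus a.e. continuity)
  have hgzero : ∀ᵐ t ∂(volume.restrict (Set.Icc (0:ℝ) 1)), g t = 0 := by
    filter_upwards [hprod.2, ae_restrict_mem measurableSet_Icc] with t ht htIcc
    have hne : (𝓝[D] t).NeBot := mem_closure_iff_nhdsWithin_neBot.1 (hDdense htIcc)
    have h1 : Tendsto g (𝓝[D] t) (𝓝 (g t)) := ht.mono_left (nhdsWithin_mono t hD)
    have h2 : Tendsto g (𝓝[D] t) (𝓝 0) := by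
      refine Tendsto.congr' ?_ tendsto_const_nhds
      filter_upwards [eventually_mem_nhdsWithin] with x hx
      simp [hgdef, hD0 x hx]
    exact tendsto_nhds_unique h1 h2
  -- Step B: Serrin–Varberg: φ' = 0 a.e. on s := φ⁻¹(N') ∩ Icc
  set N' := toMeasurable volume N with hN'def
  have hN' : volume N' = 0 := by rw [measure_toMeasurable]; exact hN
  set s : Set ℝ := φ ⁻¹' N' ∩ Set.Icc 0 1 with hsdef
  have hs : MeasurableSet s := by
    have hres : Measurable ((Set.Icc (0:ℝ) 1).restrict φ) :=
      (continuousOn_iff_continuous_restrict.mp hcont).measurable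
    have himg : MeasurableSet ((Subtype.val : Set.Icc (0:ℝ) 1 → ℝ) ''
        ((Set.Icc (0:ℝ) 1).restrict φ ⁻¹' N')) :=
      (MeasurableEmbedding.subtype_coe measurableSet_Icc).measurableSet_image.2
        (hres (measurableSet_toMeasurable _ _))
    convert himg using 1
    ext t
    constructor
    · rintro ⟨h1, h2⟩
      exact ⟨⟨t, h2⟩, h1, rfl⟩
    · rintro ⟨⟨x, hx⟩, h1, rfl⟩
      exact ⟨h1, hx⟩
  have hderivs : ∀ x ∈ s, HasFDerivWithinAt φ ((1 : ℝ →L[ℝ] ℝ).smulRight (φ' x)) s x :=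
    fun x hx => ((hder x hx.2).mono inter_subset_right).hasFDerivWithinAt
  have hinj : Set.InjOn φ s := hmono.injOn.mono inter_subset_right
  have himσ : volume (φ '' s) = 0 :=
    measure_mono_null (by rintro _ ⟨x, hx, rfl⟩; exact hx.1) hN'
  -- a.e. measurability of φ' on s
  have hmeas : AEMeasurable φ' (volume.restrict s) := by
    have hm : Measurable (fun x => derivWithin φ (Set.Ici x) x) := measurable_derivWithin_Ici φ
    refine hm.aemeasurable.congr ?_
    have hne1 : ∀ᵐ x ∂(volume.restrict s), x ≠ 1 := by
      refine ae_restrict_of_ae ?_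
      rw [ae_iff]
      convert Real.volume_singleton (a := (1:ℝ)) using 2
      ext x; simp
    filter_upwards [ae_restrict_mem hs, hne1] with x hxs hx1
    have hx : x ∈ Set.Icc (0:ℝ) 1 := hxs.2
    have hlt : x < 1 := lt_of_le_of_ne hx.2 hx1
    have hmem : Set.Icc (0:ℝ) 1 ∈ 𝓝[Set.Ici x] x := by
      refine Filter.mem_of_superset (inter_mem
        (mem_nhdsWithin_of_mem_nhds (Iio_mem_nhds hlt)) self_mem_nhdsWithin) ?_
      rintro y ⟨hy1, hy2⟩
      exact ⟨le_trans hx.1 hy2, le_of_lt hy1⟩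
    have hdx : HasDerivWithinAt φ (φ' x) (Set.Ici x) x := (hder x hx).mono_of_mem_nhdsWithin hmem
    exact hdx.derivWithin (uniqueDiffOn_Ici x x Set.self_mem_Ici)
  have hlint : (∫⁻ x in s, ENNReal.ofReal |φ' x| ∂volume) = 0 := by
    have hle := MeasureTheory.lintegral_abs_det_fderiv_le_addHaar_image volume hs hderivs hinj
    simp only [ContinuousLinearMap.smulRight_one_eq_toSpanSingleton, ContinuousLinearMap.det_toSpanSingleton] at hle
    exact le_antisymm (himσ ▸ hle) zero_le
  have hszero : ∀ᵐ x ∂(volume.restrict s), φ' x = 0 := by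
    have hae : AEMeasurable (fun x => ENNReal.ofReal |φ' x|) (volume.restrict s) :=
      (ENNReal.measurable_ofReal.comp measurable_abs).comp_aemeasurable hmeas
    have := (lintegral_eq_zero_iff' hae).1 hlint
    filter_upwards [this] with x hx
    simp only [Pi.zero_apply, ENNReal.ofReal_eq_zero] at hx
    have := abs_nonneg (φ' x)
    exact abs_eq_zero.1 (le_antisymm hx this)
  -- Step C: φ' = 0 a.e. on Icc 0 1
  have hphi : ∀ᵐ t ∂(volume.restrict (Set.Icc (0:ℝ) 1)), φ' t = 0 := by
    rw [ae_restrict_iff' measurableSet_Icc]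
    have hA : ∀ᵐ t ∂(volume : Measure ℝ), t ∈ Set.Icc (0:ℝ) 1 → g t = 0 :=
      (ae_restrict_iff' measurableSet_Icc).1 hgzero
    have hB : ∀ᵐ t ∂(volume : Measure ℝ), t ∈ s → φ' t = 0 :=
      (ae_restrict_iff' hs).1 hszero
    filter_upwards [hA, hB] with t hAt hBt htIcc
    by_cases hc : φ t ∈ N'
    · exact hBt ⟨hc, htIcc⟩
    · have hfne : f (φ t) ≠ 0 := by
        intro h0
        exact hc (subset_toMeasurable volume N ⟨hbij.mapsTo htIcc, h0⟩)
      have := hAt htIcc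
      rcases mul_eq_zero.1 this with h | h
      · exact absurd h hfne
      · exact h
  -- Step D: FTC contradiction
  have hint : IntervalIntegrable φ' volume 0 1 := by
    have heq : φ' =ᵐ[volume.restrict (Set.Icc (0:ℝ) 1)] (fun _ => (0:ℝ)) := hphi
    have : IntegrableOn φ' (Set.Icc (0:ℝ) 1) volume :=
      (integrable_zero _ _ _).congr heq.symm
    exact (this.mono_set (by rw [Set.uIcc_of_le (zero_le_one' ℝ)])).intervalIntegrable
  have hder' : ∀ x ∈ Set.Ioo (0:ℝ) 1, HasDerivWithinAt φ (φ' x) (Set.Ioi x) x := fun x hx =>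
    (((hder x (Set.Ioo_subset_Icc_self hx)).hasDerivAt
      (Icc_mem_nhds hx.1 hx.2)).hasDerivWithinAt)
  have h1 : ∫ y in (0:ℝ)..1, φ' y = φ 1 - φ 0 :=
    intervalIntegral.integral_eq_sub_of_hasDeriv_right_of_le zero_le_one hcont hder' hint
  have h2 : ∫ y in (0:ℝ)..1, φ' y = 0 := by
    rw [intervalIntegral.integral_of_le zero_le_one]
    refine MeasureTheory.integral_eq_zero_of_ae ?_
    exact ae_mono (Measure.restrict_mono Set.Ioc_subset_Icc_self le_rfl) hphi
  rw [h2, hφ0, hφ1] at h1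
  norm_num at h1
end
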